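/- Let p(n,c) denote the probability that a multigraph from the unconditioned permutation model R*(n,2k) has exactly c connected components. Then for c ≥ 2, p(n,c) = (1/c)·sum over s from 1 to n−c+1 of binom(n,s)^(1−k)·p(s,1)·p(n−s,c−1). -/

import Mathlib

open scoped Classical

/-- The number of connected components of the multigraph on vertex set `Fin n` from the
unconditioned permutation model `R*(n, 2k)` generated by the permutations `π i`:
vertices `a` and `b` are joined by an edge iff `π i a = b` for some `i`. -/
noncomputable def numComponents {n : ℕ} (k : ℕ) (π : Fin k → Equiv.Perm (Fin n)) : ℕ :=
  Nat.card (Quot (fun a b : Fin n => ∃ i, π i a = b))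

/-- `p k n c` is the probability that a multigraph drawn from `R*(n, 2k)`
(i.e. generated by `k` independent uniform permutations of `[n]`) has exactly `c`
connected components. -/
noncomputable def pComp (k n c : ℕ) : ℝ :=
  ((Finset.univ.filter
      (fun π : Fin k → Equiv.Perm (Fin n) => numComponents k π = c)).card : ℝ) /
    (Fintype.card (Fin k → Equiv.Perm (Fin n)) : ℝ)

namespace Stmt11Aux

variable {α β : Type*}

def rel {k : ℕ} (π : Fin k → Equiv.Perm α) (a b : α) : Prop := ∃ i, π i a = b

noncomputable def comps {k : ℕ} (π : Fin k → Equiv.Perm α) : ℕ := Nat.card (Quot (rel π))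

noncomputable def restr {k : ℕ} (π : Fin k → Equiv.Perm α) (p : α → Prop) :
    Fin k → Equiv.Perm {x // p x} :=
  fun i => if h : ∀ a, p a ↔ p (π i a) then (π i).subtypePerm (fun a => (h a).symm) else 1

noncomputable def clsF {k : ℕ} [Fintype α] (π : Fin k → Equiv.Perm α) (a : α) : Finset α :=
  Finset.univ.filter (fun b => Quot.mk (rel π) b = Quot.mk (rel π) a)

noncomputable def Ncount (k : ℕ) (α : Type*) (m : ℕ) : ℕ :=
  Nat.card {π : Fin k → Equiv.Perm α // comps π = m}

instance {k : ℕ} [Finite α] (π : Fin k → Equiv.Perm α) : Finite (Quot (rel π)) :=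
  Finite.of_surjective _ Quot.mk_surjective

lemma comps_le_card {k : ℕ} [Finite α] (π : Fin k → Equiv.Perm α) :
    comps π ≤ Nat.card α :=
  Nat.card_le_card_of_surjective _ Quot.mk_surjective

lemma comps_congr (e : α ≃ β) {k : ℕ} (π : Fin k → Equiv.Perm α) :
    comps (fun i => e.permCongr (π i)) = comps π := by
  unfold comps
  refine (Nat.card_congr (Quot.congr e fun a b => ?_)).symm
  simp [rel, Equiv.permCongr, Equiv.trans_apply]

lemma card_classes {k : ℕ} [Fintype α] [DecidableEq α] (π : Fin k → Equiv.Perm α) :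
    (Finset.univ.image (clsF π)).card = comps π := by
  haveI : Fintype (Quot (rel π)) := Fintype.ofFinite _
  have hcls : clsF π = (fun q => Finset.univ.filter (fun b => Quot.mk (rel π) b = q)) ∘
      (Quot.mk (rel π)) := rfl
  have hinj : Function.Injective
      (fun q : Quot (rel π) => Finset.univ.filter (fun b => Quot.mk (rel π) b = q)) := by
    intro q₁ q₂ h
    obtain ⟨a, ha⟩ := Quot.mk_surjective q₁
    have h1 : a ∈ Finset.univ.filter (fun b => Quot.mk (rel π) b = q₁) := by simp [ha]
    simp only at h
    rw [h, Finset.mem_filter] at h1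
    rw [← ha, h1.2]
  rw [hcls, ← Finset.image_image, Finset.image_univ_of_surjective Quot.mk_surjective,
    Finset.card_image_of_injective _ hinj, comps, Nat.card_eq_fintype_card,
    Finset.card_univ]

lemma mem_iff_of_eqvGen {k : ℕ} {π : Fin k → Equiv.Perm α} {p : α → Prop}
    (hp : ∀ i a, p a ↔ p (π i a)) {x y : α} (h : Relation.EqvGen (rel π) x y) :
    p x ↔ p y := by
  induction h with
  | rel x y hr => obtain ⟨i, hi⟩ := hr; exact hi ▸ hp i x
  | refl => exact Iff.rfl
  | symm _ _ _ ih => exact ih.symm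
  | trans _ _ _ _ _ ih1 ih2 => exact ih1.trans ih2

lemma restr_eq {k : ℕ} {π : Fin k → Equiv.Perm α} {p : α → Prop}
    (hp : ∀ i a, p a ↔ p (π i a)) (i : Fin k) :
    restr π p i = (π i).subtypePerm (fun a => (hp i a).symm) := dif_pos (hp i)

lemma eqvGen_restr {k : ℕ} {π : Fin k → Equiv.Perm α} {p : α → Prop}
    (hp : ∀ i a, p a ↔ p (π i a)) {x y : α} (h : Relation.EqvGen (rel π) x y) :
    ∀ (hx : p x) (hy : p y),
      Quot.mk (rel (restr π p)) ⟨x, hx⟩ = Quot.mk (rel (restr π p)) ⟨y, hy⟩ := by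
  induction h with
  | rel x y hr =>
    obtain ⟨i, hi⟩ := hr
    intro hx hy
    exact Quot.sound ⟨i, Subtype.ext (by rw [restr_eq hp]; exact hi)⟩
  | refl x => intro hx hy; rfl
  | symm x y _ ih => intro hx hy; exact (ih hy hx).symm
  | trans x y z hxy hyz ih1 ih2 =>
    intro hx hz
    have hy : p y := (mem_iff_of_eqvGen hp hxy).mp hx
    exact (ih1 hx hy).trans (ih2 hy hz)

lemma eqvGen_of_restr {k : ℕ} {π : Fin k → Equiv.Perm α} {p : α → Prop}
    (hp : ∀ i a, p a ↔ p (π i a)) {x y : {a // p a}}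
    (h : Relation.EqvGen (rel (restr π p)) x y) :
    Relation.EqvGen (rel π) x.1 y.1 := by
  induction h with
  | rel x y hr =>
    obtain ⟨i, hi⟩ := hr
    refine Relation.EqvGen.rel _ _ ⟨i, ?_⟩
    rw [restr_eq hp] at hi
    exact congrArg Subtype.val hi
  | refl x => exact Relation.EqvGen.refl _
  | symm x y _ ih => exact ih.symm _ _
  | trans x y z _ _ ih1 ih2 => exact ih1.trans _ _ _ ih2

lemma class_iff {k : ℕ} [Fintype α] [DecidableEq α] (π : Fin k → Equiv.Perm α) (S : Finset α) :
    S ∈ Finset.univ.image (clsF π) ↔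
      (∀ i a, a ∈ S ↔ π i a ∈ S) ∧ S.Nonempty ∧ comps (restr π (· ∈ S)) = 1 := by
  constructor
  · rintro hmem
    obtain ⟨a, -, rfl⟩ := Finset.mem_image.mp hmem
    have hinv : ∀ (i : Fin k) (b : α), b ∈ clsF π a ↔ π i b ∈ clsF π a := by
      intro i b
      have : Quot.mk (rel π) b = Quot.mk (rel π) (π i b) := Quot.sound ⟨i, rfl⟩
      simp [clsF, ← this]
    refine ⟨hinv, ⟨a, by simp [clsF]⟩, ?_⟩
    rw [comps, Nat.card_eq_one_iff_unique]
    constructor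
    · constructor
      intro q₁ q₂
      induction q₁ using Quot.ind with
      | _ x =>
        induction q₂ using Quot.ind with
        | _ y =>
          obtain ⟨x, hx⟩ := x
          obtain ⟨y, hy⟩ := y
          have hxa : Relation.EqvGen (rel π) x a := by
            have := (Finset.mem_filter.mp hx).2
            exact Quot.eq.mp this
          have hya : Relation.EqvGen (rel π) y a := by
            have := (Finset.mem_filter.mp hy).2
            exact Quot.eq.mp this
          exact eqvGen_restr hinv (hxa.trans _ _ _ (hya.symm _ _)) hx hy
    · exact ⟨Quot.mk _ ⟨a, by simp [clsF]⟩⟩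
  · rintro ⟨hinv, ⟨a, ha⟩, hcomp⟩
    refine Finset.mem_image.mpr ⟨a, Finset.mem_univ _, ?_⟩
    ext b
    simp only [clsF, Finset.mem_filter, Finset.mem_univ, true_and]
    rw [Quot.eq]
    constructor
    · intro h
      exact (mem_iff_of_eqvGen hinv h).mpr ha
    · intro hb
      have hsub := (Nat.card_eq_one_iff_unique.mp hcomp).1
      have : Quot.mk (rel (restr π (· ∈ S))) ⟨b, hb⟩ = Quot.mk _ ⟨a, ha⟩ :=
        Subsingleton.elim _ _
      exact eqvGen_of_restr hinv (Quot.eq.mp this)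

lemma comps_split {k : ℕ} [Finite α] (π : Fin k → Equiv.Perm α) (p : α → Prop)
    (hp : ∀ i a, p a ↔ p (π i a)) :
    comps π = comps (restr π p) + comps (restr π (fun a => ¬ p a)) := by
  have hp' : ∀ i a, ¬ p a ↔ ¬ p (π i a) := fun i a => not_congr (hp i a)
  have e1 : restr π p = fun i => (π i).subtypePerm (fun a => (hp i a).symm) :=
    funext fun i => restr_eq hp i
  have e2 : restr π (fun a => ¬ p a) = fun i => (π i).subtypePerm (fun a => (hp' i a).symm) :=
    funext fun i => restr_eq hp' i
  rw [e1, e2]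
  set σ := fun i => (π i).subtypePerm (fun a => (hp i a).symm) with hσ
  set τ := fun i => (π i).subtypePerm (p := fun a => ¬ p a) (fun a => (hp' i a).symm) with hτ
  have key : Quot (rel π) ≃ Quot (rel σ) ⊕ Quot (rel τ) := by
    refine ⟨Quot.lift (fun a => if h : p a then .inl (Quot.mk _ ⟨a, h⟩)
        else .inr (Quot.mk _ ⟨a, h⟩)) ?_,
      Sum.elim (Quot.lift (fun x => Quot.mk (rel π) x.1) ?_)
        (Quot.lift (fun x => Quot.mk (rel π) x.1) ?_), ?_, ?_⟩
    · rintro a b ⟨i, hib⟩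
      by_cases h : p a
      · have hb : p b := hib ▸ (hp i a).mp h
        simp only [dif_pos h, dif_pos hb]
        exact congrArg _ (Quot.sound ⟨i, Subtype.ext hib⟩)
      · have hb : ¬ p b := hib ▸ fun hb => h ((hp i a).mpr hb)
        simp only [dif_neg h, dif_neg hb]
        exact congrArg _ (Quot.sound ⟨i, Subtype.ext hib⟩)
    · rintro ⟨a, ha⟩ ⟨b, hb⟩ ⟨i, h⟩
      exact Quot.sound ⟨i, congrArg Subtype.val h⟩
    · rintro ⟨a, ha⟩ ⟨b, hb⟩ ⟨i, h⟩
      exact Quot.sound ⟨i, congrArg Subtype.val h⟩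
    · refine Quot.ind fun a => ?_
      by_cases h : p a <;> simp [h]
    · rintro (q | q)
      · induction q using Quot.ind with
        | _ x => obtain ⟨a, ha⟩ := x; simp [ha]
      · induction q using Quot.ind with
        | _ x => obtain ⟨a, ha⟩ := x; simp [ha]
  rw [comps, comps, comps, Nat.card_congr key, Nat.card_sum]

lemma ncount_congr (e : α ≃ β) (k m : ℕ) : Ncount k α m = Ncount k β m := by
  refine Nat.card_congr
    (Equiv.subtypeEquiv (Equiv.piCongrRight fun _ => e.permCongr) fun π => ?_)
  show comps π = m ↔ comps (fun i => e.permCongr (π i)) = m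
  rw [comps_congr e π]

end Stmt11Aux

namespace Stmt11Aux
variable {α β : Type*}

variable {k : ℕ} {p : α → Prop} [DecidablePred p]

lemma comb_inv (σ : Fin k → Equiv.Perm {x // p x}) (τ : Fin k → Equiv.Perm {x // ¬ p x})
    (i : Fin k) (a : α) : p a ↔ p ((Equiv.Perm.subtypeCongr (σ i) (τ i)) a) := by
  by_cases h : p a
  · rw [Equiv.Perm.subtypeCongr.left_apply _ _ h]
    exact iff_of_true h (σ i ⟨a, h⟩).2
  · rw [Equiv.Perm.subtypeCongr.right_apply _ _ h]
    exact iff_of_false h (τ i ⟨a, h⟩).2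

lemma restr_comb_left (σ : Fin k → Equiv.Perm {x // p x}) (τ : Fin k → Equiv.Perm {x // ¬ p x}) :
    restr (fun i => Equiv.Perm.subtypeCongr (σ i) (τ i)) p = σ := by
  funext i
  ext ⟨a, ha⟩
  rw [restr_eq (comb_inv σ τ)]
  exact (Equiv.Perm.subtypeCongr.left_apply _ _ ha : _)

lemma restr_comb_right (σ : Fin k → Equiv.Perm {x // p x}) (τ : Fin k → Equiv.Perm {x // ¬ p x}) :
    restr (fun i => Equiv.Perm.subtypeCongr (σ i) (τ i)) (fun a => ¬ p a) = τ := by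
  funext i
  ext ⟨a, ha⟩
  rw [restr_eq (fun i a => not_congr (comb_inv σ τ i a))]
  exact (Equiv.Perm.subtypeCongr.right_apply _ _ ha : _)

lemma comb_restr (π : Fin k → Equiv.Perm α) (hinv : ∀ i a, p a ↔ p (π i a)) :
    (fun i => Equiv.Perm.subtypeCongr (restr π p i) (restr π (fun a => ¬ p a) i)) = π := by
  funext i
  ext a
  by_cases h : p a
  · rw [Equiv.Perm.subtypeCongr.left_apply _ _ h, restr_eq hinv]
    rfl
  · rw [Equiv.Perm.subtypeCongr.right_apply _ _ h,
      restr_eq (fun i a => not_congr (hinv i a))]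
    rfl

lemma ncount_split {c : ℕ} [Fintype α] [DecidableEq α] (hc : 1 ≤ c) (S : Finset α) :
    Nat.card {π : Fin k → Equiv.Perm α //
        comps π = c ∧ S ∈ Finset.univ.image (clsF π)}
      = Ncount k {x // x ∈ S} 1 * Ncount k {x // ¬ x ∈ S} (c - 1) := by
  rw [Ncount, Ncount, ← Nat.card_prod]
  apply Nat.card_congr
  refine Equiv.ofBijective (fun π =>
    (⟨restr π.1 (· ∈ S), by
        obtain ⟨hcomps, hcls⟩ := π.2
        exact ((class_iff π.1 S).mp hcls).2.2⟩,
     ⟨restr π.1 (fun a => ¬ a ∈ S), by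
        obtain ⟨hcomps, hcls⟩ := π.2
        obtain ⟨hinv, hne, h1⟩ := (class_iff π.1 S).mp hcls
        have hsplit := comps_split π.1 (· ∈ S) hinv
        omega⟩)) ⟨?_, ?_⟩
  · rintro ⟨π₁, h₁⟩ ⟨π₂, h₂⟩ heq
    simp only [Prod.mk.injEq, Subtype.mk.injEq] at heq
    obtain ⟨e1, e2⟩ := heq
    have hinv1 := ((class_iff π₁ S).mp h₁.2).1
    have hinv2 := ((class_iff π₂ S).mp h₂.2).1
    have c1 := comb_restr (p := (· ∈ S)) π₁ hinv1
    have c2 := comb_restr (p := (· ∈ S)) π₂ hinv2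
    refine Subtype.ext ?_
    calc π₁ = fun i => Equiv.Perm.subtypeCongr (restr π₁ (· ∈ S) i)
          (restr π₁ (fun a => ¬ a ∈ S) i) := c1.symm
      _ = fun i => Equiv.Perm.subtypeCongr (restr π₂ (· ∈ S) i)
          (restr π₂ (fun a => ¬ a ∈ S) i) := by rw [e1, e2]
      _ = π₂ := c2
  · rintro ⟨⟨σ, h1⟩, ⟨τ, h2⟩⟩
    refine ⟨⟨fun i => Equiv.Perm.subtypeCongr (σ i) (τ i), ?_, ?_⟩, ?_⟩
    · have hsplit := comps_split (fun i => Equiv.Perm.subtypeCongr (σ i) (τ i))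
        (· ∈ S) (comb_inv σ τ)
      rw [restr_comb_left, restr_comb_right] at hsplit
      omega
    · rw [class_iff]
      refine ⟨comb_inv σ τ, ?_, ?_⟩
      · obtain ⟨⟨a, ha⟩⟩ := (Nat.card_eq_one_iff_unique.mp h1).2
        exact ⟨a, ha⟩
      · rw [restr_comb_left]
        exact h1
    · refine Prod.ext (Subtype.ext ?_) (Subtype.ext ?_)
      · exact restr_comb_left σ τ
      · exact restr_comb_right σ τ

end Stmt11Aux

namespace Stmt11Aux
variable {α β : Type*}

lemma card_filter_eq_nat_card {γ : Type*} [Fintype γ] (q : γ → Prop) [DecidablePred q] :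
    (Finset.univ.filter q).card = Nat.card {x // q x} := by
  rw [Nat.card_eq_fintype_card, Fintype.card_subtype]

lemma ncount_lt_zero (k t m : ℕ) (h : t < m) : Ncount k (Fin t) m = 0 := by
  rw [Ncount]
  have : IsEmpty {π : Fin k → Equiv.Perm (Fin t) // comps π = m} := by
    refine ⟨fun ⟨π, hπ⟩ => ?_⟩
    have := comps_le_card π
    rw [Nat.card_eq_fintype_card, Fintype.card_fin] at this
    omega
  exact Nat.card_of_isEmpty

lemma master (k n c : ℕ) (hc : 2 ≤ c) :
    c * Ncount k (Fin n) c
      = ∑ s ∈ Finset.range (n + 1), n.choose s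
          * Ncount k (Fin s) 1 * Ncount k (Fin (n - s)) (c - 1) := by
  have hNc : Ncount k (Fin n) c
      = (Finset.univ.filter (fun π : Fin k → Equiv.Perm (Fin n) => comps π = c)).card := by
    rw [card_filter_eq_nat_card]
    rfl
  rw [hNc]
  have step1 : c * (Finset.univ.filter
        (fun π : Fin k → Equiv.Perm (Fin n) => comps π = c)).card
      = ∑ π ∈ Finset.univ.filter (fun π : Fin k → Equiv.Perm (Fin n) => comps π = c),
          (Finset.univ.image (clsF π)).card := by
    rw [mul_comm, ← smul_eq_mul, ← Finset.sum_const]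
    exact Finset.sum_congr rfl fun π hπ =>
      ((card_classes π).trans (Finset.mem_filter.mp hπ).2).symm
  rw [step1]
  have step2 : ∀ π : Fin k → Equiv.Perm (Fin n), (Finset.univ.image (clsF π)).card
      = ∑ S ∈ (Finset.univ : Finset (Finset (Fin n))),
          if S ∈ Finset.univ.image (clsF π) then 1 else 0 := by
    intro π
    rw [← Finset.card_filter, Finset.filter_univ_mem]
  simp_rw [step2]
  rw [Finset.sum_comm]
  have step3 : ∀ S : Finset (Fin n),
      (∑ π ∈ Finset.univ.filter (fun π : Fin k → Equiv.Perm (Fin n) => comps π = c),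
        if S ∈ Finset.univ.image (clsF π) then 1 else 0)
      = (Finset.univ.filter (fun π : Fin k → Equiv.Perm (Fin n) =>
          comps π = c ∧ S ∈ Finset.univ.image (clsF π))).card := by
    intro S
    rw [Finset.card_filter]
    simp_rw [ite_and]
    rw [Finset.sum_filter]
  rw [Finset.sum_congr rfl (fun S _ => step3 S)]
  have step4 : ∀ S : Finset (Fin n),
      (Finset.univ.filter (fun π : Fin k → Equiv.Perm (Fin n) =>
          comps π = c ∧ S ∈ Finset.univ.image (clsF π))).card
      = Ncount k (Fin S.card) 1 * Ncount k (Fin (n - S.card)) (c - 1) := by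
    intro S
    have hcard : Fintype.card {x // ¬ x ∈ S} = n - S.card := by
      rw [Fintype.card_subtype_compl, Fintype.card_fin]
      congr 1
      exact Fintype.card_coe S
    rw [card_filter_eq_nat_card, ncount_split (show 1 ≤ c by omega) S,
      ncount_congr S.equivFin, ncount_congr (Fintype.equivFinOfCardEq hcard)]
  rw [Finset.sum_congr rfl (fun S _ => step4 S)]
  rw [← Finset.sum_fiberwise_of_maps_to (g := Finset.card)
    (t := Finset.range (n + 1)) (fun S _ => Finset.mem_range.mpr
      (Nat.lt_succ_of_le ((Finset.card_le_univ S).trans_eq (by simp))))]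
  refine Finset.sum_congr rfl fun s hs => ?_
  have hfil : Finset.univ.filter (fun S : Finset (Fin n) => S.card = s)
      = Finset.powersetCard s Finset.univ := by
    rw [Finset.powersetCard_eq_filter, Finset.powerset_univ]
  calc (∑ S ∈ Finset.univ.filter (fun S : Finset (Fin n) => S.card = s),
        Ncount k (Fin S.card) 1 * Ncount k (Fin (n - S.card)) (c - 1))
      = ∑ _S ∈ Finset.univ.filter (fun S : Finset (Fin n) => S.card = s),
        Ncount k (Fin s) 1 * Ncount k (Fin (n - s)) (c - 1) := by
        refine Finset.sum_congr rfl fun S hS => ?_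
        have : S.card = s := (Finset.mem_filter.mp hS).2
        rw [this]
    _ = n.choose s * Ncount k (Fin s) 1 * Ncount k (Fin (n - s)) (c - 1) := by
        rw [Finset.sum_const, hfil, Finset.card_powersetCard, smul_eq_mul, mul_assoc]
        congr 2
        simp

end Stmt11Aux


namespace Stmt11Aux

lemma pComp_eq (k n c : ℕ) :
    pComp k n c = (Ncount k (Fin n) c : ℝ) / ((n.factorial : ℝ)) ^ k := by
  have hnum : (Finset.univ.filter
      (fun π : Fin k → Equiv.Perm (Fin n) => numComponents k π = c)).card
      = Ncount k (Fin n) c := by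
    rw [card_filter_eq_nat_card]
    rfl
  have hden : Fintype.card (Fin k → Equiv.Perm (Fin n)) = (n.factorial) ^ k := by
    rw [Fintype.card_fun, Fintype.card_perm, Fintype.card_fin, Fintype.card_fin]
  rw [pComp, hnum, hden]
  push_cast
  ring

end Stmt11Aux

open Stmt11Aux in
/-- Recursion for the component-count distribution of `R*(n, 2k)`: for `c ≥ 2`,
`p(n,c) = (1/c) · ∑_{s=1}^{n-c+1} C(n,s)^(1-k) · p(s,1) · p(n-s, c-1)`. -/
theorem stmt11 (k n c : ℕ) (hk : 1 ≤ k) (hn : 1 ≤ n) (hc : 2 ≤ c) :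
    pComp k n c = (1 / (c : ℝ)) *
      ∑ s ∈ Finset.Icc 1 (n - c + 1),
        ((n.choose s : ℝ)) ^ ((1 : ℤ) - (k : ℤ)) * pComp k s 1 * pComp k (n - s) (c - 1) := by
  have key := master k n c hc
  have hsubset : Finset.Icc 1 (n - c + 1) ⊆ Finset.range (n + 1) := by
    intro x hx
    rw [Finset.mem_Icc] at hx
    rw [Finset.mem_range]
    omega
  have hzero : ∀ x ∈ Finset.range (n + 1), x ∉ Finset.Icc 1 (n - c + 1) →
      n.choose x * Ncount k (Fin x) 1 * Ncount k (Fin (n - x)) (c - 1) = 0 := by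
    intro x hx hnx
    rw [Finset.mem_range] at hx
    rw [Finset.mem_Icc] at hnx
    push_neg at hnx
    by_cases h0 : x = 0
    · subst h0
      rw [ncount_lt_zero k 0 1 (by omega)]
      ring
    · have hx2 : n - c + 1 < x := hnx (by omega)
      have : n - x < c - 1 := by omega
      rw [ncount_lt_zero k (n - x) (c - 1) this]
      ring
  have key2 : c * Ncount k (Fin n) c = ∑ s ∈ Finset.Icc 1 (n - c + 1),
      n.choose s * Ncount k (Fin s) 1 * Ncount k (Fin (n - s)) (c - 1) :=
    key.trans (Finset.sum_subset hsubset hzero).symm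
  -- real arithmetic
  have hterm : ∀ s ∈ Finset.Icc 1 (n - c + 1),
      ((n.choose s : ℝ)) ^ ((1 : ℤ) - (k : ℤ)) * pComp k s 1 * pComp k (n - s) (c - 1)
        = ((n.choose s * Ncount k (Fin s) 1 * Ncount k (Fin (n - s)) (c - 1) : ℕ) : ℝ)
            / ((n.factorial : ℝ)) ^ k := by
    intro s hs
    rw [Finset.mem_Icc] at hs
    have hsn : s ≤ n := by omega
    have hfact : (n.choose s : ℝ) * (s.factorial : ℝ) * ((n - s).factorial : ℝ)
        = (n.factorial : ℝ) := by
      exact_mod_cast congrArg (Nat.cast (R := ℝ))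
        (Nat.choose_mul_factorial_mul_factorial hsn)
    have hch : (n.choose s : ℝ) ≠ 0 := by
      exact_mod_cast (Nat.choose_pos hsn).ne'
    have hs0 : (s.factorial : ℝ) ≠ 0 := by
      exact_mod_cast s.factorial_ne_zero
    have ht0 : ((n - s).factorial : ℝ) ≠ 0 := by
      exact_mod_cast (n - s).factorial_ne_zero
    have hzpow : ((n.choose s : ℝ)) ^ ((1 : ℤ) - (k : ℤ))
        = (n.choose s : ℝ) / ((n.choose s : ℝ)) ^ k := by
      rw [zpow_sub₀ hch, zpow_one, zpow_natCast, div_eq_mul_inv, ← div_eq_mul_inv]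
    have hprod : ((n.choose s : ℝ)) ^ k * ((s.factorial : ℝ)) ^ k
        * (((n - s).factorial : ℝ)) ^ k = ((n.factorial : ℝ)) ^ k := by
      rw [← mul_pow, ← mul_pow, hfact]
    rw [hzpow, pComp_eq, pComp_eq]
    push_cast
    rw [← hprod]
    field_simp
  rw [Finset.sum_congr rfl hterm, pComp_eq, ← Finset.sum_div, ← Nat.cast_sum,
    ← key2]
  have hc0 : (c : ℝ) ≠ 0 := by
    exact_mod_cast (by omega : c ≠ 0)
  push_cast
  field_simp
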